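/- arXiv:2004.11330 — 5 statements merged into one kernel-verified Lean document; each statement's English description precedes it below -/
import Mathlib

section
/- Let Ω ⊂ ℝ² be open and let u : Ω → ℝ be of class C². For q ∈ Ω one has T(q) = 0 if and only if either q is a critical point of u (∇u(q) = 0), or there exists θ ∈ [0,2π) such that u_θ(q) = 0 and ∇u_θ(q) = 0. Moreover, in the second alternative with ∇u(q) ≠ 0, one may take e_θ = (u_y(q), −u_x(q))/|∇u(q)|. -/
open Real Set MeasureTheory

noncomputable section

/-- Partial derivative in the `x` direction. -/
def pdx (u : ℝ × ℝ → ℝ) (q : ℝ × ℝ) : ℝ := fderiv ℝ u q (1, 0)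

/-- Partial derivative in the `y` direction. -/
def pdy (u : ℝ × ℝ → ℝ) (q : ℝ × ℝ) : ℝ := fderiv ℝ u q (0, 1)

/-- Curvature of the level set of `u`:
`𝔎 = −(u_yy u_x² − 2 u_xy u_x u_y + u_xx u_y²)/|∇u|³`. -/
def crv (u : ℝ × ℝ → ℝ) (q : ℝ × ℝ) : ℝ :=
  -(pdy (pdy u) q * (pdx u q) ^ 2 - 2 * pdy (pdx u) q * pdx u q * pdy u q
      + pdx (pdx u) q * (pdy u q) ^ 2) / (Real.sqrt ((pdx u q) ^ 2 + (pdy u q) ^ 2)) ^ 3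

/-- The vector field
`T(q) = (u_yy u_x − u_xy u_y, u_xx u_y − u_xy u_x)(q)`. -/
def Tvec (u : ℝ × ℝ → ℝ) (q : ℝ × ℝ) : ℝ × ℝ :=
  (pdy (pdy u) q * pdx u q - pdy (pdx u) q * pdy u q,
   pdx (pdx u) q * pdy u q - pdy (pdx u) q * pdx u q)

/-- Directional derivative `u_θ = ⟨∇u, e_θ⟩`, `e_θ = (cos θ, sin θ)`. -/
def dird (u : ℝ × ℝ → ℝ) (θ : ℝ) (q : ℝ × ℝ) : ℝ :=
  Real.cos θ * pdx u q + Real.sin θ * pdy u q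

/-- `f` is of class `C^{1,α}` for some `α ∈ (0,1]` (locally Hölder derivative). -/
def C1Alpha (f : ℝ → ℝ) : Prop :=
  ContDiff ℝ 1 f ∧ ∃ α : NNReal, 0 < α ∧ α ≤ 1 ∧
    ∀ s : Set ℝ, IsCompact s → ∃ C : NNReal, HolderOnWith C α (deriv f) s

/-- `Ω` has smooth (`C^∞`) boundary: there is a global smooth defining function. -/
def SmoothBoundary (Ω : Set (ℝ × ℝ)) : Prop :=
  ∃ ρ : ℝ × ℝ → ℝ, ContDiff ℝ (⊤ : ℕ∞) ρ ∧ Ω = {p | ρ p < 0} ∧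
    ∀ p ∈ frontier Ω, ρ p = 0 ∧ fderiv ℝ ρ p ≠ 0

/-- `u ∈ C^k(cl Ω)`: `u` is `C^k` on an open neighborhood of the closure of `Ω`. -/
def ContDiffNearClosure (k : ℕ) (Ω : Set (ℝ × ℝ)) (u : ℝ × ℝ → ℝ) : Prop :=
  ∃ V : Set (ℝ × ℝ), IsOpen V ∧ closure Ω ⊆ V ∧ ContDiffOn ℝ k u V

/-- `u` solves problem (1.1): `u ∈ C³(cl Ω)`, `−Δu = f(u)` and `u > 0` in `Ω`,
`u = 0` on `∂Ω`. -/
def SolvesPb (Ω : Set (ℝ × ℝ)) (f : ℝ → ℝ) (u : ℝ × ℝ → ℝ) : Prop :=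
  ContDiffNearClosure 3 Ω u ∧
  (∀ q ∈ Ω, pdx (pdx u) q + pdy (pdy u) q = -f (u q)) ∧
  (∀ q ∈ Ω, 0 < u q) ∧
  (∀ q ∈ frontier Ω, u q = 0)

/-- `u` is semi-stable: `∫_Ω |∇φ|² − ∫_Ω f′(u) φ² ≥ 0` for all `φ ∈ C_c^∞(Ω)`. -/
def SemiStable (Ω : Set (ℝ × ℝ)) (f : ℝ → ℝ) (u : ℝ × ℝ → ℝ) : Prop :=
  ∀ φ : ℝ × ℝ → ℝ, ContDiff ℝ (⊤ : ℕ∞) φ → HasCompactSupport φ → tsupport φ ⊆ Ω →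
    0 ≤ (∫ x in Ω, ‖fderiv ℝ φ x‖ ^ 2) - ∫ x in Ω, deriv f (u x) * φ x ^ 2


private lemma clm_zero_iff (L : ℝ × ℝ →L[ℝ] ℝ) :
    L = 0 ↔ L (1, 0) = 0 ∧ L (0, 1) = 0 := by
  constructor
  · intro h; simp [h]
  · rintro ⟨h1, h2⟩
    apply ContinuousLinearMap.ext
    rintro ⟨x, y⟩
    simp only [ContinuousLinearMap.zero_apply]
    have hxy : ((x, y) : ℝ × ℝ) = x • ((1:ℝ), (0:ℝ)) + y • ((0:ℝ), (1:ℝ)) := by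
      simp [Prod.ext_iff]
    rw [hxy, map_add, L.map_smul, L.map_smul, h1, h2]
    simp

private lemma exists_angle (c s : ℝ) (h : c ^ 2 + s ^ 2 = 1) :
    ∃ θ ∈ Set.Ico (0 : ℝ) (2 * π), Real.cos θ = c ∧ Real.sin θ = s := by
  set z : ℂ := ⟨c, s⟩ with hz
  have habs : ‖z‖ = 1 := by
    have h' : c * c + s * s = 1 := by nlinarith
    rw [Complex.norm_def, hz, Complex.normSq_mk, h', Real.sqrt_one]
  have hz0 : z ≠ 0 := by
    intro h0
    rw [h0] at habs
    simp at habs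
  have hre : z.re = c := rfl
  have him : z.im = s := rfl
  have hcos : Real.cos (Complex.arg z) = c := by
    rw [Complex.cos_arg hz0, habs, hre, div_one]
  have hsin : Real.sin (Complex.arg z) = s := by
    rw [Complex.sin_arg, habs, him, div_one]
  rcases le_or_gt 0 (Complex.arg z) with hpos | hneg
  · refine ⟨Complex.arg z, ⟨hpos, ?_⟩, hcos, hsin⟩
    have := Complex.arg_le_pi z
    linarith [Real.pi_pos]
  · refine ⟨Complex.arg z + 2 * π, ⟨?_, ?_⟩, ?_, ?_⟩
    · linarith [Complex.neg_pi_lt_arg z, Real.pi_pos]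
    · linarith
    · rw [Real.cos_add_two_pi, hcos]
    · rw [Real.sin_add_two_pi, hsin]

private lemma alg1 (A M C a b c s : ℝ) (h1 : c * a + s * b = 0)
    (h2 : c * A + s * M = 0) (h3 : c * M + s * C = 0)
    (h4 : c ^ 2 + s ^ 2 = 1) :
    C * a - M * b = 0 ∧ A * b - M * a = 0 := by
  constructor
  · linear_combination (s * a - c * b) * h3 + (c * C - s * M) * h1 - (C * a - M * b) * h4
  · linear_combination (c * b - s * a) * h2 + (s * A - c * M) * h1 - (A * b - M * a) * h4

/-- characterization of the zeros of the vector field `T`. -/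
theorem Tvec_zero_iff
    (Ω : Set (ℝ × ℝ)) (u : ℝ × ℝ → ℝ) (q : ℝ × ℝ)
    (hΩopen : IsOpen Ω) (hu : ContDiffOn ℝ 2 u Ω) (hq : q ∈ Ω) :
    (Tvec u q = 0 ↔
      fderiv ℝ u q = 0 ∨
        ∃ θ ∈ Set.Ico (0 : ℝ) (2 * π),
          dird u θ q = 0 ∧ fderiv ℝ (dird u θ) q = 0) ∧
    (Tvec u q = 0 → fderiv ℝ u q ≠ 0 →
      ∃ θ ∈ Set.Ico (0 : ℝ) (2 * π),
        (Real.cos θ, Real.sin θ) =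
          (pdy u q / Real.sqrt ((pdx u q) ^ 2 + (pdy u q) ^ 2),
           -(pdx u q) / Real.sqrt ((pdx u q) ^ 2 + (pdy u q) ^ 2)) ∧
        dird u θ q = 0 ∧ fderiv ℝ (dird u θ) q = 0) := by
  have hqn : Ω ∈ nhds q := hΩopen.mem_nhds hq
  have hu2 : ContDiffAt ℝ 2 u q := hu.contDiffAt hqn
  have hu1 : ContDiffAt ℝ 1 (fderiv ℝ u) q := hu2.fderiv_right (by norm_num)
  have hF : HasFDerivAt (fderiv ℝ u) (fderiv ℝ (fderiv ℝ u) q) q :=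
    (hu1.differentiableAt one_ne_zero).hasFDerivAt
  set F := fderiv ℝ (fderiv ℝ u) q with hFdef
  have hev : ∀ᶠ y in nhds q, HasFDerivAt u (fderiv ℝ u y) y := by
    filter_upwards [hqn] with y hy
    exact ((hu.contDiffAt (hΩopen.mem_nhds hy)).differentiableAt two_ne_zero).hasFDerivAt
  have hsymm : F (1, 0) (0, 1) = F (0, 1) (1, 0) :=
    second_derivative_symmetric_of_eventually hev hF _ _
  have hG : ∀ v : ℝ × ℝ, HasFDerivAt (fun p => fderiv ℝ u p v)
      ((ContinuousLinearMap.apply ℝ ℝ v).comp F) q := fun v =>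
    ((ContinuousLinearMap.apply ℝ ℝ v).hasFDerivAt).comp q hF
  have hA : pdx (pdx u) q = F (1, 0) (1, 0) := by
    have h : fderiv ℝ (pdx u) q = (ContinuousLinearMap.apply ℝ ℝ ((1:ℝ), (0:ℝ))).comp F :=
      (hG _).fderiv
    rw [show pdx (pdx u) q = fderiv ℝ (pdx u) q (1, 0) from rfl, h]
    simp
  have hM : pdy (pdx u) q = F (0, 1) (1, 0) := by
    have h : fderiv ℝ (pdx u) q = (ContinuousLinearMap.apply ℝ ℝ ((1:ℝ), (0:ℝ))).comp F :=
      (hG _).fderiv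
    rw [show pdy (pdx u) q = fderiv ℝ (pdx u) q (0, 1) from rfl, h]
    simp
  have hC : pdy (pdy u) q = F (0, 1) (0, 1) := by
    have h : fderiv ℝ (pdy u) q = (ContinuousLinearMap.apply ℝ ℝ ((0:ℝ), (1:ℝ))).comp F :=
      (hG _).fderiv
    rw [show pdy (pdy u) q = fderiv ℝ (pdy u) q (0, 1) from rfl, h]
    simp
  have hLθ : ∀ θ : ℝ, fderiv ℝ (dird u θ) q =
      Real.cos θ • ((ContinuousLinearMap.apply ℝ ℝ ((1:ℝ), (0:ℝ))).comp F)
        + Real.sin θ • ((ContinuousLinearMap.apply ℝ ℝ ((0:ℝ), (1:ℝ))).comp F) := by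
    intro θ
    have h1 := ((hG (1, 0)).const_mul (Real.cos θ)).add ((hG (0, 1)).const_mul (Real.sin θ))
    exact h1.fderiv
  have hLval : ∀ θ : ℝ, ∀ w : ℝ × ℝ, fderiv ℝ (dird u θ) q w =
      Real.cos θ * F w (1, 0) + Real.sin θ * F w (0, 1) := by
    intro θ w
    rw [hLθ θ]
    simp
  have hLzero : ∀ θ : ℝ, (fderiv ℝ (dird u θ) q = 0 ↔
      (Real.cos θ * F (1, 0) (1, 0) + Real.sin θ * F (1, 0) (0, 1) = 0 ∧
       Real.cos θ * F (0, 1) (1, 0) + Real.sin θ * F (0, 1) (0, 1) = 0)) := by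
    intro θ
    rw [clm_zero_iff, hLval θ (1, 0), hLval θ (0, 1)]
  have hgrad : fderiv ℝ u q = 0 ↔ pdx u q = 0 ∧ pdy u q = 0 := clm_zero_iff _
  have hTiff : Tvec u q = 0 ↔
      (F (0, 1) (0, 1) * pdx u q - F (0, 1) (1, 0) * pdy u q = 0 ∧
       F (1, 0) (1, 0) * pdy u q - F (0, 1) (1, 0) * pdx u q = 0) := by
    rw [show Tvec u q = (pdy (pdy u) q * pdx u q - pdy (pdx u) q * pdy u q,
        pdx (pdx u) q * pdy u q - pdy (pdx u) q * pdx u q) from rfl, hA, hM, hC]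
    simp [Prod.ext_iff]
  have main : Tvec u q = 0 → fderiv ℝ u q ≠ 0 →
      ∃ θ ∈ Set.Ico (0 : ℝ) (2 * π),
        (Real.cos θ, Real.sin θ) =
          (pdy u q / Real.sqrt ((pdx u q) ^ 2 + (pdy u q) ^ 2),
           -(pdx u q) / Real.sqrt ((pdx u q) ^ 2 + (pdy u q) ^ 2)) ∧
        dird u θ q = 0 ∧ fderiv ℝ (dird u θ) q = 0 := by
    intro hT hne
    obtain ⟨hT1, hT2⟩ := hTiff.mp hT
    have hab : ¬(pdx u q = 0 ∧ pdy u q = 0) := fun h => hne (hgrad.mpr h)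
    set a := pdx u q with hadef
    set b := pdy u q with hbdef
    have hr2 : 0 < a ^ 2 + b ^ 2 := by
      rcases not_and_or.mp hab with h | h
      · linarith [pow_two_pos_of_ne_zero h, sq_nonneg b]
      · linarith [pow_two_pos_of_ne_zero h, sq_nonneg a]
    set r := Real.sqrt (a ^ 2 + b ^ 2) with hrdef
    have hr : 0 < r := Real.sqrt_pos.mpr hr2
    have hrr : r ^ 2 = a ^ 2 + b ^ 2 := Real.sq_sqrt hr2.le
    have hcs : (b / r) ^ 2 + (-a / r) ^ 2 = 1 := by
      field_simp
      linarith [hrr]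
    obtain ⟨θ, hθmem, hcos, hsin⟩ := exists_angle (b / r) (-a / r) hcs
    refine ⟨θ, hθmem, by rw [hcos, hsin], ?_, ?_⟩
    · show Real.cos θ * a + Real.sin θ * b = 0
      rw [hcos, hsin, div_mul_eq_mul_div, div_mul_eq_mul_div, ← add_div,
        div_eq_zero_iff]
      left
      ring
    · rw [hLzero θ, hsymm]
      constructor
      · rw [hcos, hsin, div_mul_eq_mul_div, div_mul_eq_mul_div, ← add_div,
          div_eq_zero_iff]
        left
        linear_combination hT2
      · rw [hcos, hsin, div_mul_eq_mul_div, div_mul_eq_mul_div, ← add_div,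
          div_eq_zero_iff]
        left
        linear_combination -hT1
  constructor
  · constructor
    · intro hT
      by_cases hne : fderiv ℝ u q = 0
      · exact Or.inl hne
      · obtain ⟨θ, hθ, _, h1, h2⟩ := main hT hne
        exact Or.inr ⟨θ, hθ, h1, h2⟩
    · rintro (h | ⟨θ, hθ, hd, hfd⟩)
      · obtain ⟨ha0, hb0⟩ := hgrad.mp h
        rw [hTiff, ha0, hb0]
        constructor <;> ring
      · obtain ⟨h2, h3⟩ := (hLzero θ).mp hfd
        rw [hsymm] at h2
        have h1 : Real.cos θ * pdx u q + Real.sin θ * pdy u q = 0 := hd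
        have h4 : Real.cos θ ^ 2 + Real.sin θ ^ 2 = 1 := by
          rw [← Real.sin_sq_add_cos_sq θ]; ring
        rw [hTiff]
        exact alg1 _ _ _ _ _ _ _ h1 h2 h3 h4
  · exact main
end
end

section
/- Let u be of class C³ on a neighborhood of q ∈ ℝ² and suppose ∇u(q) = 0. Then the Jacobian determinant of the map T at q equals (u_xx(q)u_yy(q) − u_xy(q)²)², i.e. det DT(q) = (det Hess u(q))². In particular, if q is a nondegenerate critical point of u then det DT(q) > 0. -/
open Real Set MeasureTheory

noncomputable section

/-- Jacobian determinant of a map `T : ℝ² → ℝ²`. -/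
def jdet (T : ℝ × ℝ → ℝ × ℝ) (q : ℝ × ℝ) : ℝ :=
  (fderiv ℝ T q (1, 0)).1 * (fderiv ℝ T q (0, 1)).2
    - (fderiv ℝ T q (0, 1)).1 * (fderiv ℝ T q (1, 0)).2

/-- at a critical point of `u`, `det DT = (det Hess u)²`; in
particular it is positive at nondegenerate critical points. -/
theorem jdet_Tvec_at_critical_point
    (U : Set (ℝ × ℝ)) (u : ℝ × ℝ → ℝ) (q : ℝ × ℝ)
    (hU : IsOpen U) (hq : q ∈ U) (hu : ContDiffOn ℝ 3 u U)
    (hcrit : fderiv ℝ u q = 0) :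
    jdet (Tvec u) q =
      (pdx (pdx u) q * pdy (pdy u) q - pdy (pdx u) q ^ 2) ^ 2 ∧
    (pdx (pdx u) q * pdy (pdy u) q - pdy (pdx u) q ^ 2 ≠ 0 →
      0 < jdet (Tvec u) q) := by
  have hnb := hU.mem_nhds hq
  have hx0 : pdx u q = 0 := by simp [pdx, hcrit]
  have hy0 : pdy u q = 0 := by simp [pdy, hcrit]
  -- smoothness of the first derivative
  have hf' : ContDiffOn ℝ 2 (fderiv ℝ u) U := hu.fderiv_of_isOpen hU (by norm_num)
  have hpx2 : ContDiffOn ℝ 2 (pdx u) U := hf'.clm_apply contDiffOn_const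
  have hpy2 : ContDiffOn ℝ 2 (pdy u) U := hf'.clm_apply contDiffOn_const
  have hpx' : ContDiffOn ℝ 1 (fderiv ℝ (pdx u)) U := hpx2.fderiv_of_isOpen hU (by norm_num)
  have hpy' : ContDiffOn ℝ 1 (fderiv ℝ (pdy u)) U := hpy2.fderiv_of_isOpen hU (by norm_num)
  -- differentiability at q
  have dpx : DifferentiableAt ℝ (pdx u) q :=
    (hpx2.contDiffAt hnb).differentiableAt (by norm_num)
  have dpy : DifferentiableAt ℝ (pdy u) q :=
    (hpy2.contDiffAt hnb).differentiableAt (by norm_num)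
  have dA : DifferentiableAt ℝ (pdy (pdy u)) q :=
    ((hpy'.clm_apply contDiffOn_const).contDiffAt hnb).differentiableAt (by norm_num)
  have dB : DifferentiableAt ℝ (pdy (pdx u)) q :=
    ((hpx'.clm_apply contDiffOn_const).contDiffAt hnb).differentiableAt (by norm_num)
  have dC : DifferentiableAt ℝ (pdx (pdx u)) q :=
    ((hpx'.clm_apply contDiffOn_const).contDiffAt hnb).differentiableAt (by norm_num)
  -- derivatives of Tvec components
  have h1 : HasFDerivAt (fun p => pdy (pdy u) p * pdx u p - pdy (pdx u) p * pdy u p)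
      ((pdy (pdy u) q • fderiv ℝ (pdx u) q + pdx u q • fderiv ℝ (pdy (pdy u)) q)
        - (pdy (pdx u) q • fderiv ℝ (pdy u) q + pdy u q • fderiv ℝ (pdy (pdx u)) q)) q :=
    (dA.hasFDerivAt.mul dpx.hasFDerivAt).sub (dB.hasFDerivAt.mul dpy.hasFDerivAt)
  have h2 : HasFDerivAt (fun p => pdx (pdx u) p * pdy u p - pdy (pdx u) p * pdx u p)
      ((pdx (pdx u) q • fderiv ℝ (pdy u) q + pdy u q • fderiv ℝ (pdx (pdx u)) q)
        - (pdy (pdx u) q • fderiv ℝ (pdx u) q + pdx u q • fderiv ℝ (pdy (pdx u)) q)) q :=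
    (dC.hasFDerivAt.mul dpy.hasFDerivAt).sub (dB.hasFDerivAt.mul dpx.hasFDerivAt)
  have hT : HasFDerivAt (Tvec u) (((pdy (pdy u) q • fderiv ℝ (pdx u) q + pdx u q • fderiv ℝ (pdy (pdy u)) q)
        - (pdy (pdx u) q • fderiv ℝ (pdy u) q + pdy u q • fderiv ℝ (pdy (pdx u)) q)).prod
      ((pdx (pdx u) q • fderiv ℝ (pdy u) q + pdy u q • fderiv ℝ (pdx (pdx u)) q)
        - (pdy (pdx u) q • fderiv ℝ (pdx u) q + pdx u q • fderiv ℝ (pdy (pdx u)) q))) q :=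
    HasFDerivAt.prodMk h1 h2
  -- Schwarz symmetry
  have hd2 : DifferentiableAt ℝ (fderiv ℝ u) q := (hf'.contDiffAt hnb).differentiableAt (by norm_num)
  have key : ∀ v w : ℝ × ℝ, fderiv ℝ (fun p => fderiv ℝ u p w) q v = fderiv ℝ (fderiv ℝ u) q v w := by
    intro v w
    rw [fderiv_clm_apply hd2 (differentiableAt_const w)]
    simp
  have hsymm : pdx (pdy u) q = pdy (pdx u) q := by
    have h := (hu.contDiffAt hnb).isSymmSndFDerivAt (n := 3) (by norm_num) (1,0) (0,1)
    have e3 : pdx (pdy u) q = fderiv ℝ (fderiv ℝ u) q (1,0) (0,1) := key (1,0) (0,1)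
    have e4 : pdy (pdx u) q = fderiv ℝ (fderiv ℝ u) q (0,1) (1,0) := key (0,1) (1,0)
    rw [e3, e4, h]
  -- evaluate
  have hj : jdet (Tvec u) q = (pdx (pdx u) q * pdy (pdy u) q - pdy (pdx u) q ^ 2) ^ 2 := by
    simp only [jdet, hT.fderiv]
    simp only [ContinuousLinearMap.prod_apply, ContinuousLinearMap.sub_apply,
      ContinuousLinearMap.add_apply, ContinuousLinearMap.smul_apply, hx0, hy0, zero_smul,
      smul_eq_mul, add_zero]
    have e1 : fderiv ℝ (pdx u) q (1,0) = pdx (pdx u) q := rfl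
    have e2 : fderiv ℝ (pdx u) q (0,1) = pdy (pdx u) q := rfl
    have e3 : fderiv ℝ (pdy u) q (1,0) = pdx (pdy u) q := rfl
    have e4 : fderiv ℝ (pdy u) q (0,1) = pdy (pdy u) q := rfl
    rw [e1, e2, e3, e4, hsymm]
    ring
  exact ⟨hj, fun hne => hj ▸ by positivity⟩
end
end

section
/- Let u be of class C³ on a neighborhood of q ∈ ℝ², let f be of class C¹, and suppose −Δu = f(u) on this neighborhood. If u_x(q) = u_xx(q) = u_xy(q) = 0, then the Jacobian determinant of T at q equals −u_y(q)² (u_xxy(q)² + u_xxx(q)²). In particular det DT(q) ≤ 0, and det DT(q) < 0 if and only if u_y(q) ≠ 0 and (u_xxx(q), u_xxy(q)) ≠ (0,0). -/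
open Real Set MeasureTheory

noncomputable section

lemma contDiffOn_pdx {U : Set (ℝ × ℝ)} (hU : IsOpen U) {u : ℝ × ℝ → ℝ} {n : WithTop ℕ∞}
    (hu : ContDiffOn ℝ (n + 1) u U) : ContDiffOn ℝ n (pdx u) U :=
  (hu.fderiv_of_isOpen hU le_rfl).clm_apply contDiffOn_const

lemma contDiffOn_pdy {U : Set (ℝ × ℝ)} (hU : IsOpen U) {u : ℝ × ℝ → ℝ} {n : WithTop ℕ∞}
    (hu : ContDiffOn ℝ (n + 1) u U) : ContDiffOn ℝ n (pdy u) U :=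
  (hu.fderiv_of_isOpen hU le_rfl).clm_apply contDiffOn_const

lemma symm2 {g : ℝ × ℝ → ℝ} {q : ℝ × ℝ} (hg : ContDiffAt ℝ 2 g q) :
    pdx (pdy g) q = pdy (pdx g) q := by
  have hd : DifferentiableAt ℝ (fderiv ℝ g) q :=
    (hg.fderiv_right (m := 1) (by norm_num)).differentiableAt one_ne_zero
  have hs := hg.isSymmSndFDerivAt (by norm_num)
  have e1 : pdx (pdy g) q = fderiv ℝ (fderiv ℝ g) q (1, 0) (0, 1) := by
    show fderiv ℝ (fun p => fderiv ℝ g p (0, 1)) q (1, 0) = _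
    rw [fderiv_clm_apply hd (differentiableAt_const _)]; simp
  have e2 : pdy (pdx g) q = fderiv ℝ (fderiv ℝ g) q (0, 1) (1, 0) := by
    show fderiv ℝ (fun p => fderiv ℝ g p (1, 0)) q (0, 1) = _
    rw [fderiv_clm_apply hd (differentiableAt_const _)]; simp
  rw [e1, e2, hs]


/-- at a point where `u_x = u_xx = u_xy = 0` one has
`det DT = −u_y² (u_xxy² + u_xxx²) ≤ 0`, with strict inequality iff `u_y ≠ 0`
and `(u_xxx, u_xxy) ≠ (0,0)`. -/
theorem jdet_Tvec_at_semidegenerate_point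
    (U : Set (ℝ × ℝ)) (u : ℝ × ℝ → ℝ) (f : ℝ → ℝ) (q : ℝ × ℝ)
    (hU : IsOpen U) (hq : q ∈ U) (hu : ContDiffOn ℝ 3 u U)
    (hf : ContDiff ℝ 1 f)
    (hpde : ∀ p ∈ U, pdx (pdx u) p + pdy (pdy u) p = -f (u p))
    (hx : pdx u q = 0) (hxx : pdx (pdx u) q = 0) (hxy : pdy (pdx u) q = 0) :
    jdet (Tvec u) q =
      -(pdy u q) ^ 2 * ((pdy (pdx (pdx u)) q) ^ 2 + (pdx (pdx (pdx u)) q) ^ 2) ∧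
    jdet (Tvec u) q ≤ 0 ∧
    (jdet (Tvec u) q < 0 ↔
      pdy u q ≠ 0 ∧ (pdx (pdx (pdx u)) q, pdy (pdx (pdx u)) q) ≠ (0, 0)) := by
  have hmem : U ∈ nhds q := hU.mem_nhds hq
  have hu3 : ContDiffOn ℝ ((2 : WithTop ℕ∞) + 1) u U := hu.of_le (by norm_num)
  have h2x : ContDiffOn ℝ 2 (pdx u) U := contDiffOn_pdx hU hu3
  have h2y : ContDiffOn ℝ 2 (pdy u) U := contDiffOn_pdy hU hu3
  have h2x' : ContDiffOn ℝ ((1 : WithTop ℕ∞) + 1) (pdx u) U := h2x.of_le (by norm_num)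
  have h2y' : ContDiffOn ℝ ((1 : WithTop ℕ∞) + 1) (pdy u) U := h2y.of_le (by norm_num)
  have h1xx : ContDiffOn ℝ 1 (pdx (pdx u)) U := contDiffOn_pdx hU h2x'
  have h1xy : ContDiffOn ℝ 1 (pdy (pdx u)) U := contDiffOn_pdy hU h2x'
  have h1yx : ContDiffOn ℝ 1 (pdx (pdy u)) U := contDiffOn_pdx hU h2y'
  have h1yy : ContDiffOn ℝ 1 (pdy (pdy u)) U := contDiffOn_pdy hU h2y'
  have dx : DifferentiableAt ℝ (pdx u) q :=
    ((h2x.differentiableOn (by norm_num)).differentiableAt hmem)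
  have dy : DifferentiableAt ℝ (pdy u) q :=
    ((h2y.differentiableOn (by norm_num)).differentiableAt hmem)
  have dxx : DifferentiableAt ℝ (pdx (pdx u)) q :=
    ((h1xx.differentiableOn (by norm_num)).differentiableAt hmem)
  have dxy : DifferentiableAt ℝ (pdy (pdx u)) q :=
    ((h1xy.differentiableOn (by norm_num)).differentiableAt hmem)
  have dyx : DifferentiableAt ℝ (pdx (pdy u)) q :=
    ((h1yx.differentiableOn (by norm_num)).differentiableAt hmem)
  have dyy : DifferentiableAt ℝ (pdy (pdy u)) q :=
    ((h1yy.differentiableOn (by norm_num)).differentiableAt hmem)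
  have px : ∀ (g : ℝ × ℝ → ℝ) (p : ℝ × ℝ), fderiv ℝ g p (1, 0) = pdx g p := fun _ _ => rfl
  have py : ∀ (g : ℝ × ℝ → ℝ) (p : ℝ × ℝ), fderiv ℝ g p (0, 1) = pdy g p := fun _ _ => rfl
  -- symmetry 1
  have s1 : pdx (pdy (pdx u)) q = pdy (pdx (pdx u)) q :=
    symm2 ((h2x.contDiffAt hmem))
  -- symmetry 2 + PDE
  have ee : pdy (pdx u) =ᶠ[nhds q] pdx (pdy u) := by
    filter_upwards [hmem] with p hp
    exact (symm2 ((hu.contDiffAt (hU.mem_nhds hp)).of_le (by norm_num))).symm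
  have e3 : pdy (pdy (pdx u)) q = pdy (pdx (pdy u)) q := by
    show fderiv ℝ (pdy (pdx u)) q (0, 1) = fderiv ℝ (pdx (pdy u)) q (0, 1)
    rw [ee.fderiv_eq]
  have e4 : pdy (pdx (pdy u)) q = pdx (pdy (pdy u)) q :=
    (symm2 (h2y.contDiffAt hmem)).symm
  have epde : (fun p => pdx (pdx u) p + pdy (pdy u) p) =ᶠ[nhds q] (fun p => -f (u p)) := by
    filter_upwards [hmem] with p hp; exact hpde p hp
  have du : DifferentiableAt ℝ u q :=
    ((hu.differentiableOn (by norm_num)).differentiableAt hmem)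
  have hfu : HasFDerivAt (fun p => -f (u p)) (-(deriv f (u q) • fderiv ℝ u q)) q :=
    (((hf.differentiable one_ne_zero (u q)).hasDerivAt).comp_hasFDerivAt q du.hasFDerivAt).neg
  have epd : pdx (pdx (pdx u)) q + pdx (pdy (pdy u)) q = 0 := by
    have h1 : fderiv ℝ (fun p => pdx (pdx u) p + pdy (pdy u) p) q
        = fderiv ℝ (fun p => -f (u p)) q := epde.fderiv_eq
    have h2 : fderiv ℝ (fun p => pdx (pdx u) p + pdy (pdy u) p) q
        = fderiv ℝ (pdx (pdx u)) q + fderiv ℝ (pdy (pdy u)) q := fderiv_add dxx dyy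
    have h3 := hfu.fderiv
    have := congrArg (fun (L : (ℝ × ℝ) →L[ℝ] ℝ) => L (1, 0)) (h2.symm.trans (h1.trans h3))
    simp only [ContinuousLinearMap.add_apply, ContinuousLinearMap.neg_apply,
      ContinuousLinearMap.coe_smul', Pi.smul_apply, smul_eq_mul, px] at this
    rw [hx] at this
    simpa using this
  have s2 : pdy (pdy (pdx u)) q = -pdx (pdx (pdx u)) q := by
    rw [e3, e4]; linarith
  -- Jacobian computation
  have hA := (dyy.hasFDerivAt.mul dx.hasFDerivAt).sub (dxy.hasFDerivAt.mul dy.hasFDerivAt)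
  have hB := (dxx.hasFDerivAt.mul dy.hasFDerivAt).sub (dxy.hasFDerivAt.mul dx.hasFDerivAt)
  have hT : HasFDerivAt (Tvec u) _ q := HasFDerivAt.prodMk hA hB
  have hmain : jdet (Tvec u) q =
      -(pdy u q) ^ 2 * ((pdy (pdx (pdx u)) q) ^ 2 + (pdx (pdx (pdx u)) q) ^ 2) := by
    simp only [jdet, hT.fderiv]
    simp only [ContinuousLinearMap.prod_apply, ContinuousLinearMap.coe_sub', Pi.sub_apply,
      ContinuousLinearMap.add_apply, ContinuousLinearMap.coe_smul', Pi.smul_apply,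
      smul_eq_mul, px, py, hx, hxx, hxy, s1, s2]
    ring
  refine ⟨hmain, ?_, ?_⟩
  · rw [hmain]
    have h0 : 0 ≤ (pdy u q) ^ 2 * ((pdy (pdx (pdx u)) q) ^ 2 + (pdx (pdx (pdx u)) q) ^ 2) := by
      positivity
    linarith
  · rw [hmain]
    constructor
    · intro h
      constructor
      · intro ha; rw [ha] at h; norm_num at h
      · intro hbc
        rw [Prod.mk.injEq] at hbc
        rw [hbc.1, hbc.2] at h; norm_num at h
    · rintro ⟨ha, hbc⟩
      have h1 : 0 < (pdy u q) ^ 2 := by positivity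
      have h2 : 0 < (pdy (pdx (pdx u)) q) ^ 2 + (pdx (pdx (pdx u)) q) ^ 2 := by
        rcases eq_or_ne (pdx (pdx (pdx u)) q) 0 with hb | hb
        · have hc : pdy (pdx (pdx u)) q ≠ 0 := fun hc => hbc (by rw [hb, hc])
          positivity
        · positivity
      nlinarith
end
end

section
/- Let Ω ⊂ ℝ² be an open, bounded domain with C¹ boundary with outward unit normal ν, and let u ∈ C²(cl Ω) satisfy u = 0 on ∂Ω. Let p ∈ Ω be such that ⟨q − p, ν(q)⟩ > 0 for every q ∈ ∂Ω (Ω is strictly star-shaped with respect to p). Assume that at every q ∈ ∂Ω one has ⟨∇u(q), ν(q)⟩ < 0 and u_yy(q)u_x(q)² − 2u_xy(q)u_x(q)u_y(q) + u_xx(q)u_y(q)² < 0 (equivalently, the level-set curvature 𝔎(q) is strictly positive). Then for every t ∈ [0,1] and every q ∈ ∂Ω, t T(q) + (1 − t)(q − p) ≠ 0. -/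
open Real Set MeasureTheory

noncomputable section

private lemma aux_c_neg (c r s : ℝ) (hr : 0 < r) (hs : 0 < s) (h : c * (r⁻¹ * s) < 0) :
    c < 0 := by
  by_contra hc
  push_neg at hc
  have := mul_nonneg hc (mul_nonneg (inv_pos.mpr hr).le hs.le)
  linarith

private lemma aux_pos (r X : ℝ) (hr : 0 < r) (h : 0 < r⁻¹ * X) : 0 < X := by
  by_contra hX
  push_neg at hX
  have := mul_nonneg (inv_pos.mpr hr).le (neg_nonneg.mpr hX)
  nlinarith

private lemma aux_final (t num m : ℝ) (ht0 : 0 ≤ t) (ht1 : t ≤ 1) (hnum : num < 0)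
    (hm : m < 0) (key : t * num + (1 - t) * m = 0) : False := by
  have h3 : t * num ≤ 0 := by nlinarith [mul_nonneg ht0 (neg_nonneg.mpr hnum.le)]
  have h4 : (1 - t) * m ≤ 0 := by
    nlinarith [mul_nonneg (by linarith : (0:ℝ) ≤ 1 - t) (neg_nonneg.mpr hm.le)]
  have h5 : (1 - t) * m = 0 := le_antisymm h4 (by linarith)
  rcases mul_eq_zero.mp h5 with h | h
  · have ht' : t = 1 := by linarith
    rw [ht'] at key
    nlinarith
  · linarith

/-- A point where `ρ` vanishes but its gradient does not is on the frontier of `{ρ < 0}`. -/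
lemma mem_frontier_of_rho_zero (Ω : Set (ℝ × ℝ)) (ρ : ℝ × ℝ → ℝ)
    (hρ : ContDiff ℝ 1 ρ) (hΩρ : Ω = {q : ℝ × ℝ | ρ q < 0}) (hΩopen : IsOpen Ω)
    (x : ℝ × ℝ) (hx0 : ρ x = 0) (hgrad : ((pdx ρ x, pdy ρ x) : ℝ × ℝ) ≠ 0) :
    x ∈ frontier Ω := by
  set a := pdx ρ x with ha
  set b := pdy ρ x with hb
  have h1 : a ≠ 0 ∨ b ≠ 0 := by
    by_contra h
    push_neg at h
    exact hgrad (by simp [Prod.ext_iff, h.1, h.2])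
  have hab : 0 < a ^ 2 + b ^ 2 := by
    rcases h1 with h | h
    · nlinarith [mul_self_pos.mpr h, sq_nonneg b]
    · nlinarith [mul_self_pos.mpr h, sq_nonneg a]
  set w : ℝ × ℝ := (-a, -b) with hwdef
  have hL : HasFDerivAt ρ (fderiv ℝ ρ x) x := (hρ.differentiable one_ne_zero x).hasFDerivAt
  have hw : (w : ℝ × ℝ) = (-a) • ((1, 0) : ℝ × ℝ) + (-b) • ((0, 1) : ℝ × ℝ) := by
    simp [hwdef, Prod.ext_iff]
  have hLw : fderiv ℝ ρ x w = -(a ^ 2 + b ^ 2) := by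
    rw [hw, map_add, (fderiv ℝ ρ x).map_smul, (fderiv ℝ ρ x).map_smul]
    simp only [smul_eq_mul]
    rw [ha, hb]
    simp only [pdx, pdy]
    ring
  have hc : HasDerivAt (fun t : ℝ => x + t • w) w 0 := by
    simpa using ((hasDerivAt_id (0 : ℝ)).smul_const w).const_add x
  have hg : HasDerivAt (fun t : ℝ => ρ (x + t • w)) (fderiv ℝ ρ x w) 0 := by
    have h0 : HasFDerivAt ρ (fderiv ℝ ρ x) ((fun t : ℝ => x + t • w) 0) := by simpa using hL
    exact h0.comp_hasDerivAt 0 hc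
  have hslope := hasDerivAt_iff_tendsto_slope.mp hg
  have hneg : ∀ᶠ t in nhdsWithin (0 : ℝ) {(0 : ℝ)}ᶜ,
      slope (fun t : ℝ => ρ (x + t • w)) 0 t < 0 :=
    hslope.eventually_lt_const (by rw [hLw]; linarith)
  have hsub : nhdsWithin (0 : ℝ) (Set.Ioi 0) ≤ nhdsWithin (0 : ℝ) {(0 : ℝ)}ᶜ :=
    nhdsWithin_mono 0 (fun t ht => ne_of_gt ht)
  have hmem : ∀ᶠ t in nhdsWithin (0 : ℝ) (Set.Ioi 0), x + t • w ∈ Ω := by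
    filter_upwards [hneg.filter_mono hsub, self_mem_nhdsWithin] with t h1' h2'
    have h2'' : (0 : ℝ) < t := h2'
    rw [slope_def_field] at h1'
    simp only [zero_smul, add_zero, hx0, sub_zero] at h1'
    have hρt : ρ (x + t • w) < 0 := by
      rcases div_neg_iff.mp h1' with ⟨_, h⟩ | ⟨h, _⟩
      · linarith
      · exact h
    rw [hΩρ]; exact hρt
  have htend : Filter.Tendsto (fun t : ℝ => x + t • w) (nhdsWithin (0 : ℝ) (Set.Ioi 0)) (nhds x) := by
    have : Filter.Tendsto (fun t : ℝ => x + t • w) (nhds 0) (nhds (x + (0 : ℝ) • w)) :=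
      (continuous_const.add (continuous_id.smul continuous_const)).tendsto 0
    simpa using this.mono_left nhdsWithin_le_nhds
  have hxcl : x ∈ closure Ω := mem_closure_of_tendsto htend hmem
  have hxnot : x ∉ Ω := by rw [hΩρ]; simp [hx0]
  rw [hΩopen.frontier_eq]
  exact ⟨hxcl, hxnot⟩

/-- admissibility of the homotopy `tT + (1−t)(· − p)` on the
boundary, under strictly positive level-set curvature on the boundary. -/
theorem homotopy_admissible_positive_curvature
    (Ω : Set (ℝ × ℝ)) (u : ℝ × ℝ → ℝ) (ρ : ℝ × ℝ → ℝ) (ν : ℝ × ℝ → ℝ × ℝ)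
    (p : ℝ × ℝ)
    (hΩopen : IsOpen Ω) (hΩne : Ω.Nonempty) (hΩbd : Bornology.IsBounded Ω)
    -- `Ω` has `C¹` boundary with outward unit normal `ν`
    (hρ : ContDiff ℝ 1 ρ) (hΩρ : Ω = {q : ℝ × ℝ | ρ q < 0})
    (hρgrad : ∀ q ∈ frontier Ω, ((pdx ρ q, pdy ρ q) : ℝ × ℝ) ≠ 0)
    (hν : ∀ q ∈ frontier Ω,
      ν q = ‖((pdx ρ q, pdy ρ q) : ℝ × ℝ)‖⁻¹ • ((pdx ρ q, pdy ρ q) : ℝ × ℝ))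
    -- `u ∈ C²(cl Ω)` and `u = 0` on `∂Ω`
    (hu : ∃ V : Set (ℝ × ℝ), IsOpen V ∧ closure Ω ⊆ V ∧ ContDiffOn ℝ 2 u V)
    (hu0 : ∀ q ∈ frontier Ω, u q = 0)
    -- `Ω` is strictly star-shaped with respect to `p ∈ Ω`
    (hp : p ∈ Ω)
    (hstar : ∀ q ∈ frontier Ω,
      0 < (q.1 - p.1) * (ν q).1 + (q.2 - p.2) * (ν q).2)
    -- `u_ν < 0` on `∂Ω`
    (hHopf : ∀ q ∈ frontier Ω, pdx u q * (ν q).1 + pdy u q * (ν q).2 < 0)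
    -- strictly positive level-set curvature on `∂Ω`
    (hnum : ∀ q ∈ frontier Ω,
      pdy (pdy u) q * (pdx u q) ^ 2 - 2 * pdy (pdx u) q * pdx u q * pdy u q
        + pdx (pdx u) q * (pdy u q) ^ 2 < 0) :
    ∀ t ∈ Set.Icc (0 : ℝ) 1, ∀ q ∈ frontier Ω,
      t • Tvec u q + (1 - t) • (q - p) ≠ (0 : ℝ × ℝ) := by
  intro t ht q hq
  obtain ⟨V, hVopen, hVsub, huV⟩ := hu
  have hclsub : closure Ω ⊆ {x : ℝ × ℝ | ρ x ≤ 0} :=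
    closure_minimal (by rw [hΩρ]; exact fun x (hx : ρ x < 0) => (le_of_lt hx : ρ x ≤ 0))
      (isClosed_le hρ.continuous continuous_const)
  have hqcl : q ∈ closure Ω := frontier_subset_closure hq
  have hqnot : q ∉ Ω := by rw [hΩopen.frontier_eq] at hq; exact hq.2
  have hρq : ρ q = 0 := by
    refine le_antisymm (hclsub hqcl) ?_
    by_contra h
    push_neg at h
    exact hqnot (by rw [hΩρ]; exact h)
  -- continuity of the gradient pair of ρ
  have hfc : Continuous (fderiv ℝ ρ) := hρ.continuous_fderiv one_ne_zero
  have hcont : Continuous fun x : ℝ × ℝ => ((pdx ρ x, pdy ρ x) : ℝ × ℝ) :=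
    (hfc.clm_apply continuous_const).prodMk (hfc.clm_apply continuous_const)
  have hUopen : IsOpen {x : ℝ × ℝ | ((pdx ρ x, pdy ρ x) : ℝ × ℝ) ≠ 0} :=
    isOpen_compl_singleton.preimage hcont
  -- local extremum of u on the level set of ρ
  have hextr : IsLocalExtrOn u {x : ℝ × ℝ | ρ x = ρ q} q := by
    have hU : {x : ℝ × ℝ | ((pdx ρ x, pdy ρ x) : ℝ × ℝ) ≠ 0} ∈ nhds q :=
      hUopen.mem_nhds (hρgrad q hq)
    have hev : ∀ᶠ x in nhdsWithin q {x : ℝ × ℝ | ρ x = ρ q}, u q ≤ u x := by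
      filter_upwards [nhdsWithin_le_nhds hU, self_mem_nhdsWithin] with x hx1 hx2
      have hx0 : ρ x = 0 := by rw [show ρ x = ρ q from hx2, hρq]
      have hxf : x ∈ frontier Ω :=
        mem_frontier_of_rho_zero Ω ρ hρ hΩρ hΩopen x hx0 hx1
      rw [hu0 x hxf, hu0 q hq]
    exact Or.inl hev
  have hρ' : HasStrictFDerivAt ρ (fderiv ℝ ρ q) q := hρ.contDiffAt.hasStrictFDerivAt one_ne_zero
  have hqV : q ∈ V := hVsub hqcl
  have hu' : HasStrictFDerivAt u (fderiv ℝ u q) q :=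
    (huV.contDiffAt (hVopen.mem_nhds hqV)).hasStrictFDerivAt (by norm_num)
  obtain ⟨a, b, hab, heq⟩ := hextr.exists_multipliers_of_hasStrictFDerivAt_1d hρ' hu'
  have heqx : a * pdx ρ q + b * pdx u q = 0 := by
    have h := ContinuousLinearMap.ext_iff.mp heq ((1, 0) : ℝ × ℝ)
    simpa [pdx, smul_eq_mul] using h
  have heqy : a * pdy ρ q + b * pdy u q = 0 := by
    have h := ContinuousLinearMap.ext_iff.mp heq ((0, 1) : ℝ × ℝ)
    simpa [pdy, smul_eq_mul] using h
  have hbne : b ≠ 0 := by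
    rintro rfl
    have hane : a ≠ 0 := by
      intro h0
      exact hab (by simp [h0, Prod.ext_iff])
    have hx0 : pdx ρ q = 0 := by
      have h' : a * pdx ρ q = 0 := by linarith [heqx]
      exact (mul_eq_zero.mp h').resolve_left hane
    have hy0 : pdy ρ q = 0 := by
      have h' : a * pdy ρ q = 0 := by linarith [heqy]
      exact (mul_eq_zero.mp h').resolve_left hane
    exact hρgrad q hq (by simp [hx0, hy0, Prod.ext_iff])
  set c : ℝ := -a / b with hcdef
  have hux : pdx u q = c * pdx ρ q := by
    rw [hcdef]; field_simp; linarith [heqx]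
  have huy : pdy u q = c * pdy ρ q := by
    rw [hcdef]; field_simp; linarith [heqy]
  set A := pdx ρ q with hA
  set B := pdy ρ q with hB
  set r := ‖((A, B) : ℝ × ℝ)‖ with hrdef
  have hr : 0 < r := norm_pos_iff.mpr (hρgrad q hq)
  have hν' := hν q hq
  have hν1 : (ν q).1 = r⁻¹ * A := by rw [hν']; rfl
  have hν2 : (ν q).2 = r⁻¹ * B := by rw [hν']; rfl
  have hABpos : 0 < A ^ 2 + B ^ 2 := by
    have h1 : A ≠ 0 ∨ B ≠ 0 := by
      by_contra h
      push_neg at h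
      refine hρgrad q hq ?_
      rw [Prod.ext_iff, ← hA, ← hB]
      exact ⟨h.1, h.2⟩
    rcases h1 with h | h
    · nlinarith [mul_self_pos.mpr h, sq_nonneg B]
    · nlinarith [mul_self_pos.mpr h, sq_nonneg A]
  have hcneg : c < 0 := by
    have h := hHopf q hq
    rw [hν1, hν2, hux, huy] at h
    have heq2 : c * A * (r⁻¹ * A) + c * B * (r⁻¹ * B) = c * (r⁻¹ * (A ^ 2 + B ^ 2)) := by ring
    rw [heq2] at h
    exact aux_c_neg c r (A ^ 2 + B ^ 2) hr hABpos h
  have hstq := hstar q hq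
  rw [hν1, hν2] at hstq
  have hst : 0 < (q.1 - p.1) * A + (q.2 - p.2) * B := by
    have heq3 : (q.1 - p.1) * (r⁻¹ * A) + (q.2 - p.2) * (r⁻¹ * B)
        = r⁻¹ * ((q.1 - p.1) * A + (q.2 - p.2) * B) := by ring
    rw [heq3] at hstq
    exact aux_pos r _ hr hstq
  -- final contradiction
  intro hS
  have hS1 : t * (pdy (pdy u) q * pdx u q - pdy (pdx u) q * pdy u q)
      + (1 - t) * (q.1 - p.1) = 0 := by
    have h := congrArg Prod.fst hS
    simpa [Tvec, smul_eq_mul] using h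
  have hS2 : t * (pdx (pdx u) q * pdy u q - pdy (pdx u) q * pdx u q)
      + (1 - t) * (q.2 - p.2) = 0 := by
    have h := congrArg Prod.snd hS
    simpa [Tvec, smul_eq_mul] using h
  set ux := pdx u q
  set uy := pdy u q
  set uxx := pdx (pdx u) q
  set uxy := pdy (pdx u) q
  set uyy := pdy (pdy u) q
  have hnumq : uyy * ux ^ 2 - 2 * uxy * ux * uy + uxx * uy ^ 2 < 0 := hnum q hq
  set num := uyy * ux ^ 2 - 2 * uxy * ux * uy + uxx * uy ^ 2 with hnumdef
  set m := (q.1 - p.1) * ux + (q.2 - p.2) * uy with hmdef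
  have hm : m < 0 := by
    have hmeq : m = c * ((q.1 - p.1) * A + (q.2 - p.2) * B) := by
      rw [hmdef, hux, huy]; ring
    rw [hmeq]
    exact mul_neg_of_neg_of_pos hcneg hst
  have key : t * num + (1 - t) * m = 0 := by
    rw [hnumdef, hmdef]
    linear_combination ux * hS1 + uy * hS2
  exact aux_final t num m ht.1 ht.2 hnumq hm key
end
end

section
/- Let Ω ⊂ {(x,y) ∈ ℝ² : y < 0} be an open, bounded domain with smooth boundary with outward unit normal ν, tangent to the x-axis at the origin 0 = (0,0), and let u ∈ C²(cl Ω) satisfy u = 0 on ∂Ω and ⟨∇u(q), ν(q)⟩ < 0 for every q ∈ ∂Ω. Let p ∈ Ω be such that ⟨q − p, ν(q)⟩ > 0 for every q ∈ ∂Ω. Assume the level-set curvature 𝔎 satisfies 𝔎(0) = 0 and 𝔎(q) > 0 for every q ∈ ∂Ω \ {0}, and assume u_xy(0) ≠ 0. Then for every t ∈ [0,1] and every q ∈ ∂Ω, t T(q) + (1 − t)(q − p) ≠ 0. -/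
open Real Set MeasureTheory

noncomputable section

open Topology Filter

lemma clm_pair (L : ℝ × ℝ →L[ℝ] ℝ) (a b : ℝ) : L (a, b) = a * L (1, 0) + b * L (0, 1) := by
  have : ((a, b) : ℝ × ℝ) = a • ((1, 0) : ℝ × ℝ) + b • ((0, 1) : ℝ × ℝ) := by
    simp [Prod.ext_iff]
  rw [this, map_add, _root_.map_smul, _root_.map_smul, smul_eq_mul, smul_eq_mul]

lemma tangential (Ω : Set (ℝ × ℝ)) (u ρ : ℝ × ℝ → ℝ)
    (hΩopen : IsOpen Ω)
    (hρ : ContDiff ℝ (⊤ : ℕ∞) ρ) (hΩρ : Ω = {q : ℝ × ℝ | ρ q < 0})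
    (hu : ∃ V : Set (ℝ × ℝ), IsOpen V ∧ closure Ω ⊆ V ∧ ContDiffOn ℝ 2 u V)
    (hu0 : ∀ q ∈ frontier Ω, u q = 0)
    (q₀ : ℝ × ℝ) (hq₀ : q₀ ∈ frontier Ω)
    (hg0 : ((pdx ρ q₀, pdy ρ q₀) : ℝ × ℝ) ≠ 0) :
    ∃ c : ℝ, pdx u q₀ = c * pdx ρ q₀ ∧ pdy u q₀ = c * pdy ρ q₀ := by
  have hρd : Differentiable ℝ ρ := hρ.differentiable (by simp)
  have hfront : frontier Ω = closure Ω \ Ω := by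
    rw [hΩopen.frontier_eq]
  -- ρ vanishes on the frontier
  have hρ0 : ∀ x ∈ frontier Ω, ρ x = 0 := by
    intro x hx
    rw [hfront] at hx
    have h1 : ρ x ≤ 0 := by
      have hsub : closure Ω ⊆ {q : ℝ × ℝ | ρ q ≤ 0} := by
        rw [hΩρ]
        exact closure_minimal (fun y (hy : ρ y < 0) => (le_of_lt hy : ρ y ≤ 0))
          (isClosed_le hρ.continuous continuous_const)
      exact hsub hx.1
    have h2 : ¬ ρ x < 0 := fun h => hx.2 (by rw [hΩρ]; exact h)
    rcases lt_or_eq_of_le h1 with h | h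
    · exact absurd h h2
    · exact h
  -- the direction of steepest ascent at q₀
  set n : ℝ × ℝ := (pdx ρ q₀, pdy ρ q₀) with hn
  have hfc : Continuous (fderiv ℝ ρ) := hρ.continuous_fderiv (by simp)
  have hgcont : Continuous fun x => fderiv ℝ ρ x n := hfc.clm_apply continuous_const
  have hgq₀ : 0 < fderiv ℝ ρ q₀ n := by
    rw [hn, clm_pair]
    have : pdx ρ q₀ ≠ 0 ∨ pdy ρ q₀ ≠ 0 := by
      by_contra h
      push_neg at h
      exact hg0 (by simp [hn, h.1, h.2, Prod.ext_iff])
    show 0 < pdx ρ q₀ * pdx ρ q₀ + pdy ρ q₀ * pdy ρ q₀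
    rcases this with h | h
    · nlinarith [mul_self_nonneg (pdy ρ q₀), mul_self_pos.mpr h]
    · nlinarith [mul_self_nonneg (pdx ρ q₀), mul_self_pos.mpr h]
  set U : Set (ℝ × ℝ) := {x | 0 < fderiv ℝ ρ x n} with hU
  have hUopen : IsOpen U := isOpen_lt continuous_const hgcont
  have hq₀U : q₀ ∈ U := hgq₀
  -- every zero of ρ inside U is a frontier point of Ω
  have hUfr : ∀ x ∈ U, ρ x = 0 → x ∈ frontier Ω := by
    intro x hxU hx0
    rw [hfront]
    constructor
    · -- x is a limit of points of Ω
      have hc : HasDerivAt (fun s : ℝ => x + s • (-n)) (-n) 0 := by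
        have h1 : HasDerivAt (fun s : ℝ => s • (-n)) ((1:ℝ) • (-n)) 0 :=
          (hasDerivAt_id (0:ℝ)).smul_const (-n)
        simpa using h1.const_add x
      have hφ : HasDerivAt (fun s : ℝ => ρ (x + s • (-n))) (-(fderiv ℝ ρ x n)) 0 := by
        have h' := ((hρd (x + (0:ℝ) • (-n))).hasFDerivAt).comp_hasDerivAt 0 hc
        simpa [Function.comp_def, map_neg] using h'
      have hneg : -(fderiv ℝ ρ x n) < 0 := by
        have : (0:ℝ) < fderiv ℝ ρ x n := hxU
        linarith
      have hslope := (hasDerivAt_iff_tendsto_slope.mp hφ).eventually_lt_const hneg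
      have hev : ∀ᶠ s in 𝓝[>] (0:ℝ), (x + s • (-n)) ∈ Ω := by
        have hmono : 𝓝[>] (0:ℝ) ≤ 𝓝[≠] (0:ℝ) :=
          nhdsWithin_mono 0 (fun s hs => ne_of_gt hs)
        filter_upwards [hslope.filter_mono hmono, self_mem_nhdsWithin] with s hs hs0
        have hs0' : (0:ℝ) < s := hs0
        rw [hΩρ]
        show ρ (x + s • (-n)) < 0
        have hx0' : ρ (x + (0:ℝ) • (-n)) = 0 := by simpa using hx0
        have hsl : slope (fun s : ℝ => ρ (x + s • (-n))) 0 s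
            = (s - 0)⁻¹ • (ρ (x + s • (-n)) - ρ (x + (0:ℝ) • (-n))) := rfl
        rw [hsl, hx0'] at hs
        simp only [sub_zero, smul_eq_mul] at hs
        have := mul_neg_of_pos_of_neg hs0' hs
        rwa [mul_inv_cancel_left₀ (ne_of_gt hs0')] at this
      have htend : Filter.Tendsto (fun s : ℝ => x + s • (-n)) (𝓝[>] (0:ℝ)) (𝓝 x) := by
        have : Filter.Tendsto (fun s : ℝ => x + s • (-n)) (𝓝 (0:ℝ)) (𝓝 x) := by
          have hco : Continuous (fun s : ℝ => x + s • (-n)) :=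
            continuous_const.add (continuous_id.smul continuous_const)
          simpa using hco.tendsto 0
        exact this.mono_left nhdsWithin_le_nhds
      exact mem_closure_of_tendsto htend hev
    · rw [hΩρ]; simp [hx0]
  -- u has a local extremum on {ρ = ρ q₀} at q₀
  obtain ⟨V, hVopen, hVcl, hucd⟩ := hu
  have hq₀V : q₀ ∈ V := hVcl (frontier_subset_closure hq₀)
  have huq₀ : u q₀ = 0 := hu0 q₀ hq₀
  have hextr : IsLocalExtrOn u {x | ρ x = ρ q₀} q₀ := by
    right
    have hev : ∀ᶠ x in nhdsWithin q₀ {x | ρ x = ρ q₀}, u x ≤ u q₀ := by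
      filter_upwards [mem_nhdsWithin_of_mem_nhds (hUopen.mem_nhds hq₀U),
        self_mem_nhdsWithin] with x hxU hxs
      have : ρ x = 0 := by rw [hxs, hρ0 q₀ hq₀]
      rw [hu0 x (hUfr x hxU this), huq₀]
    exact hev
  -- Lagrange multipliers
  have hρs : HasStrictFDerivAt ρ (fderiv ℝ ρ q₀) q₀ :=
    (hρ.contDiffAt).hasStrictFDerivAt (by simp)
  have hus : HasStrictFDerivAt u (fderiv ℝ u q₀) q₀ :=
    ((hucd.contDiffAt (hVopen.mem_nhds hq₀V)).hasStrictFDerivAt (by norm_num))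
  obtain ⟨a, b, hab, hcomb⟩ := hextr.exists_multipliers_of_hasStrictFDerivAt_1d hρs hus
  have hb : b ≠ 0 := by
    intro hb0
    apply hab
    have ha0 : a = 0 := by
      by_contra ha
      apply hg0
      have h1 : a • fderiv ℝ ρ q₀ = 0 := by simpa [hb0] using hcomb
      have h2 : ∀ v, a * fderiv ℝ ρ q₀ v = 0 := by
        intro v
        have := congrFun (congrArg DFunLike.coe h1) v
        simpa using this
      have hx := h2 (1,0); have hy := h2 (0,1)
      have hx' : pdx ρ q₀ = 0 := by
        have := mul_eq_zero.mp hx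
        tauto
      have hy' : pdy ρ q₀ = 0 := by
        have := mul_eq_zero.mp hy
        tauto
      rw [hn]
      exact Prod.mk_eq_zero.mpr ⟨hx', hy'⟩
    simp [ha0, hb0, Prod.ext_iff]
  have h1 := congrFun (congrArg DFunLike.coe hcomb) ((1:ℝ),(0:ℝ))
  have h2 := congrFun (congrArg DFunLike.coe hcomb) ((0:ℝ),(1:ℝ))
  simp only [ContinuousLinearMap.add_apply, ContinuousLinearMap.smul_apply,
    ContinuousLinearMap.zero_apply, smul_eq_mul] at h1 h2
  refine ⟨-a / b, ?_, ?_⟩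
  · simp only [pdx]
    field_simp
    linear_combination h1
  · simp only [pdy]
    field_simp
    linear_combination h2

/-- admissibility of the homotopy `tT + (1−t)(· − p)` on the
boundary when the curvature vanishes exactly at the tangency point `0` and
`u_xy(0) ≠ 0`. -/
theorem homotopy_admissible_flat_point
    (Ω : Set (ℝ × ℝ)) (u : ℝ × ℝ → ℝ) (ρ : ℝ × ℝ → ℝ) (ν : ℝ × ℝ → ℝ × ℝ)
    (p : ℝ × ℝ)
    (hΩopen : IsOpen Ω) (hΩne : Ω.Nonempty) (hΩbd : Bornology.IsBounded Ω)
    (hΩhalf : Ω ⊆ {q : ℝ × ℝ | q.2 < 0})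
    -- `Ω` has smooth boundary with outward unit normal `ν`
    (hρ : ContDiff ℝ (⊤ : ℕ∞) ρ) (hΩρ : Ω = {q : ℝ × ℝ | ρ q < 0})
    (hρgrad : ∀ q ∈ frontier Ω, ((pdx ρ q, pdy ρ q) : ℝ × ℝ) ≠ 0)
    (hν : ∀ q ∈ frontier Ω,
      ν q = ‖((pdx ρ q, pdy ρ q) : ℝ × ℝ)‖⁻¹ • ((pdx ρ q, pdy ρ q) : ℝ × ℝ))
    -- `∂Ω` is tangent to the x-axis at the origin
    (h0bd : ((0, 0) : ℝ × ℝ) ∈ frontier Ω)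
    (hν0 : ν ((0, 0) : ℝ × ℝ) = ((0, 1) : ℝ × ℝ))
    -- `u ∈ C²(cl Ω)`, `u = 0` and `u_ν < 0` on `∂Ω`
    (hu : ∃ V : Set (ℝ × ℝ), IsOpen V ∧ closure Ω ⊆ V ∧ ContDiffOn ℝ 2 u V)
    (hu0 : ∀ q ∈ frontier Ω, u q = 0)
    (hHopf : ∀ q ∈ frontier Ω, pdx u q * (ν q).1 + pdy u q * (ν q).2 < 0)
    -- `Ω` is strictly star-shaped with respect to `p ∈ Ω`
    (hp : p ∈ Ω)
    (hstar : ∀ q ∈ frontier Ω,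
      0 < (q.1 - p.1) * (ν q).1 + (q.2 - p.2) * (ν q).2)
    -- curvature vanishes only at the origin
    (hcurv0 : crv u ((0, 0) : ℝ × ℝ) = 0)
    (hcurv : ∀ q ∈ frontier Ω, q ≠ ((0, 0) : ℝ × ℝ) → 0 < crv u q)
    (hxy0 : pdy (pdx u) ((0, 0) : ℝ × ℝ) ≠ 0) :
    ∀ t ∈ Set.Icc (0 : ℝ) 1, ∀ q ∈ frontier Ω,
      t • Tvec u q + (1 - t) • (q - p) ≠ (0 : ℝ × ℝ) := by
  intro t ht q hq heq
  -- components of the homotopy equation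
  have h1 : t * (pdy (pdy u) q * pdx u q - pdy (pdx u) q * pdy u q)
      + (1 - t) * (q.1 - p.1) = 0 := by
    have h := congrArg Prod.fst heq
    simpa [Tvec] using h
  have h2 : t * (pdx (pdx u) q * pdy u q - pdy (pdx u) q * pdx u q)
      + (1 - t) * (q.2 - p.2) = 0 := by
    have h := congrArg Prod.snd heq
    simpa [Tvec] using h
  -- the gradient of u is a negative multiple of the gradient of ρ
  obtain ⟨c, hux, huy⟩ := tangential Ω u ρ hΩopen hρ hΩρ hu hu0 q hq (hρgrad q hq)
  have hgne : ((pdx ρ q, pdy ρ q) : ℝ × ℝ) ≠ 0 := hρgrad q hq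
  obtain ⟨r, hr⟩ : ∃ r : ℝ, r = ‖((pdx ρ q, pdy ρ q) : ℝ × ℝ)‖⁻¹ := ⟨_, rfl⟩
  have hrpos : 0 < r := by
    rw [hr]
    exact inv_pos.mpr (norm_pos_iff.mpr hgne)
  have hν1 : (ν q).1 = r * pdx ρ q := by rw [hν q hq, hr]; simp
  have hν2 : (ν q).2 = r * pdy ρ q := by rw [hν q hq, hr]; simp
  have hPP : 0 < (pdx ρ q) ^ 2 + (pdy ρ q) ^ 2 := by
    have hne : pdx ρ q ≠ 0 ∨ pdy ρ q ≠ 0 := by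
      by_contra h
      push_neg at h
      exact hgne (Prod.mk_eq_zero.mpr ⟨h.1, h.2⟩)
    rcases hne with h | h
    · nlinarith [sq_nonneg (pdy ρ q), sq_abs (pdx ρ q), abs_pos.mpr h,
        mul_self_pos.mpr h]
    · nlinarith [sq_nonneg (pdx ρ q), mul_self_pos.mpr h]
  have hcneg : c < 0 := by
    have hH := hHopf q hq
    rw [hux, huy, hν1, hν2] at hH
    by_contra hc
    push_neg at hc
    nlinarith [mul_nonneg (mul_nonneg hc hrpos.le) hPP.le]
  by_cases hq0 : q = ((0, 0) : ℝ × ℝ)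
  · subst hq0
    -- at the origin: ν = (0,1), so pdx ρ = 0 and pdy ρ > 0
    have hP1 : r * pdx ρ ((0,0) : ℝ × ℝ) = 0 := by rw [← hν1, hν0]
    have hP2 : r * pdy ρ ((0,0) : ℝ × ℝ) = 1 := by rw [← hν2, hν0]
    have hPx0 : pdx ρ ((0,0) : ℝ × ℝ) = 0 := by
      rcases mul_eq_zero.mp hP1 with h | h
      · exact absurd h (ne_of_gt hrpos)
      · exact h
    have hPypos : 0 < pdy ρ ((0,0) : ℝ × ℝ) := by nlinarith [hrpos]
    have hux0 : pdx u ((0,0) : ℝ × ℝ) = 0 := by rw [hux, hPx0, mul_zero]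
    have hw : pdy u ((0,0) : ℝ × ℝ) < 0 := by
      rw [huy]; exact mul_neg_of_neg_of_pos hcneg hPypos
    -- the curvature condition forces u_xx(0) = 0
    have hD : 0 < Real.sqrt ((pdx u ((0,0):ℝ×ℝ)) ^ 2 + (pdy u ((0,0):ℝ×ℝ)) ^ 2) := by
      apply Real.sqrt_pos.mpr
      rw [hux0]
      nlinarith [hw]
    have huxx : pdx (pdx u) ((0,0) : ℝ × ℝ) = 0 := by
      rw [crv, div_eq_zero_iff] at hcurv0
      rcases hcurv0 with h | h
      · rw [neg_eq_zero, hux0] at h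
        have h' : pdx (pdx u) ((0,0):ℝ×ℝ) * (pdy u ((0,0):ℝ×ℝ)) ^ 2 = 0 := by
          nlinarith [h]
        rcases mul_eq_zero.mp h' with h'' | h''
        · exact h''
        · exact absurd h'' (pow_ne_zero 2 (ne_of_lt hw))
      · exact absurd h (pow_ne_zero 3 (ne_of_gt hD))
    have hp2 : p.2 < 0 := by
      have hs := hstar ((0,0) : ℝ × ℝ) h0bd
      rw [hν0] at hs
      simp at hs
      linarith
    -- the second component forces t = 1
    have hq1 : ((0,0) : ℝ × ℝ).1 = 0 := rfl
    have hq2 : ((0,0) : ℝ × ℝ).2 = 0 := rfl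
    rw [hux0, hq1] at h1
    rw [huxx, hux0, hq2] at h2
    have h2' : (1 - t) * p.2 = 0 := by linear_combination -h2
    have ht1 : t = 1 := by
      rcases mul_eq_zero.mp h2' with h | h
      · linarith
      · linarith
    rw [ht1] at h1
    have h1' : pdy (pdx u) ((0,0) : ℝ × ℝ) * pdy u ((0,0) : ℝ × ℝ) = 0 := by
      linear_combination -h1
    rcases mul_eq_zero.mp h1' with h | h
    · exact hxy0 h
    · exact absurd h (ne_of_lt hw)
  · -- away from the origin
    have hcrv := hcurv q hq hq0
    have hD3 : 0 < (Real.sqrt ((pdx u q) ^ 2 + (pdy u q) ^ 2)) ^ 3 := by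
      apply pow_pos
      apply Real.sqrt_pos.mpr
      rw [hux, huy]
      have hc2 : (0:ℝ) < c ^ 2 := by
        rw [sq]
        exact mul_pos_of_neg_of_neg hcneg hcneg
      have hid : (c * pdx ρ q) ^ 2 + (c * pdy ρ q) ^ 2
          = c ^ 2 * ((pdx ρ q) ^ 2 + (pdy ρ q) ^ 2) := by ring
      rw [hid]
      exact mul_pos hc2 hPP
    have hNneg : pdy (pdy u) q * (pdx u q) ^ 2 - 2 * pdy (pdx u) q * pdx u q * pdy u q
        + pdx (pdx u) q * (pdy u q) ^ 2 < 0 := by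
      rw [crv] at hcrv
      have := mul_pos hcrv hD3
      rw [div_mul_cancel₀ _ (ne_of_gt hD3)] at this
      linarith
    have hdot : 0 < (q.1 - p.1) * pdx ρ q + (q.2 - p.2) * pdy ρ q := by
      have hs := hstar q hq
      rw [hν1, hν2] at hs
      have hring : (q.1 - p.1) * (r * pdx ρ q) + (q.2 - p.2) * (r * pdy ρ q)
          = r * ((q.1 - p.1) * pdx ρ q + (q.2 - p.2) * pdy ρ q) := by ring
      rw [hring] at hs
      rcases mul_pos_iff.mp hs with ⟨_, hd⟩ | ⟨hr', _⟩
      · exact hd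
      · linarith
    rw [hux, huy] at h1 h2 hNneg
    have hcd : c * ((q.1 - p.1) * pdx ρ q + (q.2 - p.2) * pdy ρ q) < 0 :=
      mul_neg_of_neg_of_pos hcneg hdot
    rcases ht.1.eq_or_lt with h | h
    · have h1' : q.1 - p.1 = 0 := by
        linear_combination h1 + (pdy (pdy u) q * (c * pdx ρ q)
          - pdy (pdx u) q * (c * pdy ρ q) - (q.1 - p.1)) * h
      have h2' : q.2 - p.2 = 0 := by
        linear_combination h2 + (pdx (pdx u) q * (c * pdy ρ q)
          - pdy (pdx u) q * (c * pdx ρ q) - (q.2 - p.2)) * h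
      rw [h1', h2'] at hdot
      simp at hdot
    · have hS : t * (pdy (pdy u) q * (c * pdx ρ q) ^ 2
          - 2 * pdy (pdx u) q * (c * pdx ρ q) * (c * pdy ρ q)
          + pdx (pdx u) q * (c * pdy ρ q) ^ 2)
          + (1 - t) * (c * ((q.1 - p.1) * pdx ρ q + (q.2 - p.2) * pdy ρ q)) = 0 := by
        linear_combination (c * pdx ρ q) * h1 + (c * pdy ρ q) * h2
      have e1 : t * (pdy (pdy u) q * (c * pdx ρ q) ^ 2
          - 2 * pdy (pdx u) q * (c * pdx ρ q) * (c * pdy ρ q)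
          + pdx (pdx u) q * (c * pdy ρ q) ^ 2) < 0 :=
        mul_neg_of_pos_of_neg h hNneg
      have e2 : (1 - t) * (c * ((q.1 - p.1) * pdx ρ q + (q.2 - p.2) * pdy ρ q)) ≤ 0 :=
        mul_nonpos_of_nonneg_of_nonpos (by linarith [ht.2]) hcd.le
      linarith
end
end
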